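/- Separating Axis Theorem for planar polygons: let S₁ and S₂ be nonempty finite subsets of the Euclidean plane ℝ² such that the convex hulls (over ℝ) of S₁ and S₂ are disjoint, and assume that at least one of S₁, S₂ contains two distinct points. Then there exist a nonzero vector v ∈ ℝ² and two distinct points X ≠ Y such that ⟨v, X⟩ = ⟨v, Y⟩ and either (i) X, Y ∈ S₁, ⟨v, z⟩ ≤ ⟨v, X⟩ for every z in the convex hull of S₁, and ⟨v, X⟩ ≤ ⟨v, z⟩ for every z in the convex hull of S₂, or (ii) X, Y ∈ S₂, ⟨v, z⟩ ≤ ⟨v, X⟩ for every z in the convex hull of S₂, and ⟨v, X⟩ ≤ ⟨v, z⟩ for every z in the convex hull of S₁. In other words, the line through two points of one of the two sets, with v an outer normal to the polygon spanned by that set, (weakly) separates the two convex hulls. (Paper: Theorem 3.2.) -/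

import Mathlib

open RealInnerProductSpace
open Pointwise


private lemma inner_two (x y : EuclideanSpace ℝ (Fin 2)) : ⟪x,y⟫ = x 0 * y 0 + x 1 * y 1 := by
  simp [PiLp.inner_apply, Fin.sum_univ_two, RCLike.inner_apply, conj_trivial]; ring

private lemma comp_ne (x : EuclideanSpace ℝ (Fin 2)) (h : x ≠ 0) : x 0 ≠ 0 ∨ x 1 ≠ 0 := by
  by_contra hc; push_neg at hc; apply h; ext i; fin_cases i <;> simp [hc.1, hc.2]

private lemma parallel_of_perp (t x y : EuclideanSpace ℝ (Fin 2)) (ht : t ≠ 0)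
    (hx : ⟪x, t⟫ = 0) (hy : ⟪y, t⟫ = 0) (hx0 : x ≠ 0) : ∃ c : ℝ, y = c • x := by
  rw [inner_two] at hx hy
  have hcross : x 0 * y 1 = x 1 * y 0 := by
    rcases comp_ne t ht with h | h
    · have h0 : (x 0 * y 1 - x 1 * y 0) * t 0 = 0 := by linear_combination y 1 * hx - x 1 * hy
      rcases mul_eq_zero.mp h0 with h' | h'
      · linarith
      · exact absurd h' h
    · have h0 : (x 0 * y 1 - x 1 * y 0) * t 1 = 0 := by linear_combination x 0 * hy - y 0 * hx
      rcases mul_eq_zero.mp h0 with h' | h'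
      · linarith
      · exact absurd h' h
  rcases comp_ne x hx0 with h | h
  · refine ⟨y 0 / x 0, ?_⟩
    ext i; fin_cases i <;> simp
    · field_simp
    · field_simp; nlinarith [hcross]
  · refine ⟨y 1 / x 1, ?_⟩
    ext i; fin_cases i <;> simp
    · field_simp; nlinarith [hcross]
    · field_simp

set_option maxHeartbeats 1000000 in
private lemma sat_key (T : Set (EuclideanSpace ℝ (Fin 2))) (hT : T.Finite)
    (t0 t0' : EuclideanSpace ℝ (Fin 2)) (ht0 : t0 ∈ T) (ht0' : t0' ∈ T) (hne : t0 ≠ t0')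
    (h0 : (0 : EuclideanSpace ℝ (Fin 2)) ∉ convexHull ℝ T) :
    ∃ v : EuclideanSpace ℝ (Fin 2), v ≠ 0 ∧ ∃ t1 ∈ T, ∃ t2 ∈ T, t1 ≠ t2 ∧
      ⟪v, t1⟫ = ⟪v, t2⟫ ∧ (∀ t ∈ T, 0 ≤ ⟪v, t⟫) ∧ (∀ t ∈ T, ⟪v, t1⟫ ≤ ⟪v, t⟫) := by
  classical
  obtain ⟨f, c, hc0, hcb⟩ := geometric_hahn_banach_point_closed (convex_convexHull ℝ T)
    (hT.isCompact_convexHull (𝕜 := ℝ)).isClosed h0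
  set u := (InnerProductSpace.toDual ℝ (EuclideanSpace ℝ (Fin 2))).symm f with hu_def
  have hfu : ∀ x, ⟪u, x⟫ = f x := fun x => InnerProductSpace.toDual_symm_apply
  have hc0' : (0:ℝ) < c := by simpa using hc0
  have hu : ∀ t ∈ T, 0 < ⟪u, t⟫ := by
    intro t ht
    rw [hfu]
    exact hc0'.trans (hcb t (subset_convexHull ℝ T ht))
  set w : EuclideanSpace ℝ (Fin 2) := (WithLp.equiv 2 (Fin 2 → ℝ)).symm ![-(u 1), u 0] with hw_def
  have hw0 : w 0 = -(u 1) := rfl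
  have hw1 : w 1 = u 0 := rfl
  have huw : ⟪w, u⟫ = 0 := by rw [inner_two, hw0, hw1]; ring
  have hww : ⟪w, w⟫ = ⟪u, u⟫ := by rw [inner_two, inner_two, hw0, hw1]; ring
  have hu0 : u ≠ 0 := by
    intro h
    have := hu t0 ht0
    rw [h, inner_zero_left] at this
    exact lt_irrefl _ this
  have huu : (0:ℝ) < ⟪u, u⟫ :=
    lt_of_le_of_ne real_inner_self_nonneg (fun h => hu0 (inner_self_eq_zero.mp h.symm))
  set F : EuclideanSpace ℝ (Fin 2) → ℝ → ℝ :=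
    fun t θ => Real.cos θ * ⟪u, t⟫ + Real.sin θ * ⟪w, t⟫ with hF_def
  have hFv : ∀ (θ : ℝ) (t : EuclideanSpace ℝ (Fin 2)),
      ⟪Real.cos θ • u + Real.sin θ • w, t⟫ = F t θ := by
    intro θ t
    rw [inner_add_left, real_inner_smul_left, real_inner_smul_left]
  have hFcont : ∀ t, Continuous (F t) :=
    fun t => (Real.continuous_cos.mul continuous_const).add
      (Real.continuous_sin.mul continuous_const)
  have hvne : ∀ θ : ℝ, Real.cos θ • u + Real.sin θ • w ≠ 0 := by
    intro θ h
    have h1 : Real.cos θ * ⟪u, u⟫ = 0 := by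
      have h1' : ⟪Real.cos θ • u + Real.sin θ • w, u⟫ = 0 := by rw [h, inner_zero_left]
      rw [inner_add_left, real_inner_smul_left, real_inner_smul_left, huw] at h1'
      linarith
    have h2 : Real.sin θ * ⟪u, u⟫ = 0 := by
      have h2' : ⟪Real.cos θ • u + Real.sin θ • w, w⟫ = 0 := by rw [h, inner_zero_left]
      rw [inner_add_left, real_inner_smul_left, real_inner_smul_left, hww,
        real_inner_comm w u, huw] at h2'
      linarith
    have hc : Real.cos θ = 0 := by
      rcases mul_eq_zero.mp h1 with h' | h'
      · exact h'
      · exact absurd h' (ne_of_gt huu)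
    have hs : Real.sin θ = 0 := by
      rcases mul_eq_zero.mp h2 with h' | h'
      · exact h'
      · exact absurd h' (ne_of_gt huu)
    have := Real.sin_sq_add_cos_sq θ
    rw [hc, hs] at this; norm_num at this
  set Ap : Set ℝ := Set.Icc 0 Real.pi ∩ ⋂ t ∈ T, {θ | 0 ≤ F t θ} with hAp_def
  set Am : Set ℝ := Set.Icc (-Real.pi) 0 ∩ ⋂ t ∈ T, {θ | 0 ≤ F t θ} with hAm_def
  have hApmem : ∀ θ, θ ∈ Ap ↔ (θ ∈ Set.Icc 0 Real.pi ∧ ∀ t ∈ T, 0 ≤ F t θ) := by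
    intro θ; simp [hAp_def, Set.mem_iInter]
  have hAmmem : ∀ θ, θ ∈ Am ↔ (θ ∈ Set.Icc (-Real.pi) 0 ∧ ∀ t ∈ T, 0 ≤ F t θ) := by
    intro θ; simp [hAm_def, Set.mem_iInter]
  have hclosed : IsClosed (⋂ t ∈ T, {θ | 0 ≤ F t θ}) :=
    isClosed_biInter fun t _ => isClosed_le continuous_const (hFcont t)
  have hApcl : IsClosed Ap := isClosed_Icc.inter hclosed
  have hAmcl : IsClosed Am := isClosed_Icc.inter hclosed
  have h0Ap : (0:ℝ) ∈ Ap := by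
    rw [hApmem]
    refine ⟨⟨le_refl 0, Real.pi_pos.le⟩, fun t ht => ?_⟩
    simp only [hF_def, Real.cos_zero, Real.sin_zero, one_mul, zero_mul, add_zero]
    exact (hu t ht).le
  have h0Am : (0:ℝ) ∈ Am := by
    rw [hAmmem]
    refine ⟨⟨by linarith [Real.pi_pos], le_refl 0⟩, fun t ht => ?_⟩
    simp only [hF_def, Real.cos_zero, Real.sin_zero, one_mul, zero_mul, add_zero]
    exact (hu t ht).le
  have hApbdd : BddAbove Ap := ⟨Real.pi, fun x hx => ((hApmem x).mp hx).1.2⟩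
  have hAmbdd : BddBelow Am := ⟨-Real.pi, fun x hx => ((hAmmem x).mp hx).1.1⟩
  set θp := sSup Ap with hθp_def
  set θm := sInf Am with hθm_def
  have hθpA : θp ∈ Ap := hApcl.csSup_mem ⟨0, h0Ap⟩ hApbdd
  have hθmA : θm ∈ Am := hAmcl.csInf_mem ⟨0, h0Am⟩ hAmbdd
  obtain ⟨⟨hθp0, hθpπ⟩, hθppos⟩ := (hApmem θp).mp hθpA
  obtain ⟨⟨hθmπ, hθm0⟩, hθmpos⟩ := (hAmmem θm).mp hθmA
  have hθplt : θp < Real.pi := by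
    rcases lt_or_eq_of_le hθpπ with h | h
    · exact h
    · exfalso
      have := hθppos t0 ht0
      rw [h] at this
      simp only [hF_def, Real.cos_pi, Real.sin_pi, zero_mul, add_zero, neg_one_mul] at this
      linarith [hu t0 ht0]
  have hθmgt : -Real.pi < θm := by
    rcases lt_or_eq_of_le hθmπ with h | h
    · exact h
    · exfalso
      have := hθmpos t0 ht0
      rw [← h] at this
      simp only [hF_def, Real.cos_neg, Real.sin_neg, Real.cos_pi, Real.sin_pi, zero_mul,
        neg_zero, add_zero, neg_one_mul] at this
      linarith [hu t0 ht0]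
  have hzerop : ∃ tp ∈ T, F tp θp = 0 := by
    by_contra hcon
    push_neg at hcon
    have hpos : ∀ t ∈ T, 0 < F t θp := fun t ht => (hθppos t ht).lt_of_ne' (hcon t ht)
    have hVopen : IsOpen (⋂ t ∈ T, {θ | 0 < F t θ}) :=
      hT.isOpen_biInter fun t _ => isOpen_lt continuous_const (hFcont t)
    have hVmem : θp ∈ ⋂ t ∈ T, {θ | 0 < F t θ} := by
      simp only [Set.mem_iInter]; exact fun t ht => hpos t ht
    obtain ⟨ε, hε, hball⟩ := Metric.isOpen_iff.mp hVopen θp hVmem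
    obtain ⟨m, hm_pos, hm_le1, hm_le2⟩ :
        ∃ m : ℝ, 0 < m ∧ m ≤ ε/2 ∧ m ≤ (Real.pi - θp)/2 :=
      ⟨min (ε/2) ((Real.pi - θp)/2), lt_min (by linarith) (by linarith),
        min_le_left _ _, min_le_right _ _⟩
    have hθ'A : θp + m ∈ Ap := by
      rw [hApmem]
      refine ⟨⟨by linarith, by linarith⟩, fun t ht => ?_⟩
      have hball' : θp + m ∈ Metric.ball θp ε := by
        rw [Metric.mem_ball, Real.dist_eq, abs_of_pos (by linarith : (0:ℝ) < θp + m - θp)]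
        linarith
      have := hball hball'
      simp only [Set.mem_iInter] at this
      exact (this t ht).le
    have := le_csSup hApbdd hθ'A
    linarith
  have hzerom : ∃ tm ∈ T, F tm θm = 0 := by
    by_contra hcon
    push_neg at hcon
    have hpos : ∀ t ∈ T, 0 < F t θm := fun t ht => (hθmpos t ht).lt_of_ne' (hcon t ht)
    have hVopen : IsOpen (⋂ t ∈ T, {θ | 0 < F t θ}) :=
      hT.isOpen_biInter fun t _ => isOpen_lt continuous_const (hFcont t)
    have hVmem : θm ∈ ⋂ t ∈ T, {θ | 0 < F t θ} := by
      simp only [Set.mem_iInter]; exact fun t ht => hpos t ht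
    obtain ⟨ε, hε, hball⟩ := Metric.isOpen_iff.mp hVopen θm hVmem
    obtain ⟨m, hm_pos, hm_le1, hm_le2⟩ :
        ∃ m : ℝ, 0 < m ∧ m ≤ ε/2 ∧ m ≤ (θm + Real.pi)/2 :=
      ⟨min (ε/2) ((θm + Real.pi)/2), lt_min (by linarith) (by linarith),
        min_le_left _ _, min_le_right _ _⟩
    have hθ'A : θm - m ∈ Am := by
      rw [hAmmem]
      refine ⟨⟨by linarith, by linarith⟩, fun t ht => ?_⟩
      have hball' : θm - m ∈ Metric.ball θm ε := by
        rw [Metric.mem_ball, Real.dist_eq, abs_of_neg (by linarith : θm - m - θm < 0)]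
        linarith
      have := hball hball'
      simp only [Set.mem_iInter] at this
      exact (this t ht).le
    have := csInf_le hAmbdd hθ'A
    linarith
  obtain ⟨tp, htpT, htp0⟩ := hzerop
  obtain ⟨tm, htmT, htm0⟩ := hzerom
  set vp := Real.cos θp • u + Real.sin θp • w with hvp_def
  set vm := Real.cos θm • u + Real.sin θm • w with hvm_def
  have hvp0 : vp ≠ 0 := hvne θp
  have hvm0 : vm ≠ 0 := hvne θm
  have hvpt : ∀ t, ⟪vp, t⟫ = F t θp := fun t => hFv θp t
  have hvmt : ∀ t, ⟪vm, t⟫ = F t θm := fun t => hFv θm t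
  by_cases hzp : ∃ t ∈ T, t ≠ tp ∧ F t θp = 0
  · obtain ⟨t', ht'T, ht'ne, ht'0⟩ := hzp
    refine ⟨vp, hvp0, tp, htpT, t', ht'T, fun h => ht'ne h.symm, ?_, ?_, ?_⟩
    · rw [hvpt, hvpt, htp0, ht'0]
    · intro t ht; rw [hvpt]; exact hθppos t ht
    · intro t ht; rw [hvpt, hvpt, htp0]; exact hθppos t ht
  by_cases hzm : ∃ t ∈ T, t ≠ tm ∧ F t θm = 0
  · obtain ⟨t', ht'T, ht'ne, ht'0⟩ := hzm
    refine ⟨vm, hvm0, tm, htmT, t', ht'T, fun h => ht'ne h.symm, ?_, ?_, ?_⟩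
    · rw [hvmt, hvmt, htm0, ht'0]
    · intro t ht; rw [hvmt]; exact hθmpos t ht
    · intro t ht; rw [hvmt, hvmt, htm0]; exact hθmpos t ht
  push_neg at hzp hzm
  have hnegmul : ∀ c' : ℝ, c' < 0 → vm = c' • vp → False := by
    intro c' hc' hvmc
    have hall : ∀ t ∈ T, F t θp = 0 := by
      intro t ht
      have h1 : 0 ≤ F t θp := hθppos t ht
      have h2 : 0 ≤ c' * F t θp := by
        have h3 := hθmpos t ht
        rw [← hvmt, hvmc, real_inner_smul_left, hvpt] at h3
        exact h3
      nlinarith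
    by_cases ht0p : t0 = tp
    · have ht0'p : t0' ≠ tp := fun h => hne (ht0p.trans h.symm)
      exact hzp t0' ht0' ht0'p (hall t0' ht0')
    · exact hzp t0 ht0 ht0p (hall t0 ht0)
  
  by_cases heq : tp = tm
  · -- both unique zeros coincide: the two boundary directions are parallel
    exfalso
    have htne0 : tp ≠ 0 := fun h => h0 (h ▸ subset_convexHull ℝ T htpT)
    have hvp_perp : ⟪vp, tp⟫ = 0 := by rw [hvpt]; exact htp0
    have hvm_perp : ⟪vm, tp⟫ = 0 := by rw [hvmt, heq]; exact htm0
    obtain ⟨c', hc'⟩ := parallel_of_perp tp vp vm htne0 hvp_perp hvm_perp hvp0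
    have hc'0 : c' ≠ 0 := by
      rintro rfl
      rw [zero_smul] at hc'
      exact hvm0 hc'
    rcases lt_or_gt_of_ne hc'0 with hlt | hgt
    · exact hnegmul c' hlt hc'
    · have huw' : ⟪u, w⟫ = 0 := by rw [real_inner_comm]; exact huw
      have e1 : F u θm = c' * F u θp := by
        have h' := congrArg (fun z => ⟪z, u⟫) hc'
        simp only [real_inner_smul_left] at h'
        rw [hvmt u, hvpt u] at h'
        exact h'
      have e2 : F w θm = c' * F w θp := by
        have h' := congrArg (fun z => ⟪z, w⟫) hc'
        simp only [real_inner_smul_left] at h'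
        rw [hvmt w, hvpt w] at h'
        exact h'
      simp only [hF_def] at e1 e2
      have f1 : Real.cos θm = c' * Real.cos θp := by
        have h3 : (Real.cos θm - c' * Real.cos θp) * ⟪u, u⟫ = 0 := by
          linear_combination e1 - (Real.sin θm - c' * Real.sin θp) * huw
        rcases mul_eq_zero.mp h3 with h' | h'
        · linarith
        · exact absurd h' (ne_of_gt huu)
      have f2 : Real.sin θm = c' * Real.sin θp := by
        have h3 : (Real.sin θm - c' * Real.sin θp) * ⟪u, u⟫ = 0 := by
          linear_combination e2 - (Real.cos θm - c' * Real.cos θp) * huw' -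
            (Real.sin θm - c' * Real.sin θp) * hww
        rcases mul_eq_zero.mp h3 with h' | h'
        · linarith
        · exact absurd h' (ne_of_gt huu)
      have hsq : c' ^ 2 = 1 := by
        have hm' := Real.sin_sq_add_cos_sq θm
        have hp' := Real.sin_sq_add_cos_sq θp
        linear_combination hm' - c' ^ 2 * hp' -
          (Real.sin θm + c' * Real.sin θp) * f2 - (Real.cos θm + c' * Real.cos θp) * f1
      have hc'1 : c' = 1 := by
        have : (c' - 1) * (c' + 1) = 0 := by linear_combination hsq
        rcases mul_eq_zero.mp this with h' | h'
        · linarith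
        · linarith
      rw [hc'1, one_mul] at f1 f2
      have hsp : 0 ≤ Real.sin θp := Real.sin_nonneg_of_nonneg_of_le_pi hθp0 hθpπ
      have hsm : Real.sin θm ≤ 0 := Real.sin_nonpos_of_nonpos_of_neg_pi_le hθm0 hθmπ
      have hsp0 : Real.sin θp = 0 := by linarith
      have hθpeq : θp = 0 :=
        (Real.sin_eq_zero_iff_of_lt_of_lt (by linarith [Real.pi_pos]) hθplt).mp hsp0
      rw [hθpeq] at htp0
      simp only [hF_def, Real.cos_zero, Real.sin_zero, one_mul, zero_mul, add_zero] at htp0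
      linarith [hu tp htpT]
  · -- tp ≠ tm: interpolate between the two boundary directions
    set G : EuclideanSpace ℝ (Fin 2) → ℝ → ℝ :=
      fun t s => (1 - s) * F t θm + s * F t θp with hG_def
    have hGv : ∀ (s : ℝ) t, ⟪(1 - s) • vm + s • vp, t⟫ = G t s := by
      intro s t
      rw [inner_add_left, real_inner_smul_left, real_inner_smul_left, hvmt, hvpt]
    have hGcont : ∀ t, Continuous fun s => G t s := by
      intro t
      show Continuous fun s : ℝ => (1 - s) * F t θm + s * F t θp
      exact ((continuous_const.sub continuous_id).mul continuous_const).add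
        (continuous_id.mul continuous_const)
    set B : Set ℝ := Set.Icc 0 1 ∩ ⋂ t ∈ T, {s | G tm s ≤ G t s} with hB_def
    have hBmem : ∀ s, s ∈ B ↔ (s ∈ Set.Icc (0:ℝ) 1 ∧ ∀ t ∈ T, G tm s ≤ G t s) := by
      intro s; simp [hB_def, Set.mem_iInter]
    have hBcl : IsClosed B :=
      isClosed_Icc.inter
        (isClosed_biInter fun t _ => isClosed_le (hGcont tm) (hGcont t))
    have h0B : (0:ℝ) ∈ B := by
      rw [hBmem]
      refine ⟨⟨le_refl 0, zero_le_one⟩, fun t ht => ?_⟩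
      simp only [hG_def, sub_zero, one_mul, zero_mul, add_zero]
      rw [htm0]
      exact hθmpos t ht
    have hBbdd : BddAbove B := ⟨1, fun x hx => ((hBmem x).mp hx).1.2⟩
    set s₀ := sSup B with hs₀_def
    have hs₀B : s₀ ∈ B := hBcl.csSup_mem ⟨0, h0B⟩ hBbdd
    obtain ⟨⟨hs₀0, hs₀1⟩, hs₀min⟩ := (hBmem s₀).mp hs₀B
    have hs₀lt : s₀ < 1 := by
      rcases lt_or_eq_of_le hs₀1 with h | h
      · exact h
      · exfalso
        have h1 := hs₀min tp htpT
        rw [h] at h1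
        simp only [hG_def, sub_self, zero_mul, one_mul, zero_add] at h1
        rw [htp0] at h1
        have h2 := hθppos tm htmT
        exact hzp tm htmT (Ne.symm heq) (le_antisymm h1 h2)
    have hvs0 : (1 - s₀) • vm + s₀ • vp ≠ 0 := by
      intro h
      by_cases hs0 : s₀ = 0
      · rw [hs0, sub_zero, one_smul, zero_smul, add_zero] at h
        exact hvm0 h
      · have hs0pos : 0 < s₀ := lt_of_le_of_ne hs₀0 (Ne.symm hs0)
        have h1s : (0:ℝ) < 1 - s₀ := by linarith
        have h2 : (1 - s₀) • vm = (-s₀) • vp := by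
          rw [neg_smul]
          exact eq_neg_of_add_eq_zero_left h
        have hvmeq : vm = (-s₀ / (1 - s₀)) • vp := by
          rw [div_eq_mul_inv, mul_comm, ← smul_smul, ← h2, smul_smul,
            inv_mul_cancel₀ (ne_of_gt h1s), one_smul]
        exact hnegmul _ (div_neg_of_neg_of_pos (by linarith) h1s) hvmeq
    by_cases htie : ∃ t' ∈ T, t' ≠ tm ∧ G t' s₀ = G tm s₀
    · obtain ⟨t', ht'T, ht'ne, ht'eq⟩ := htie
      refine ⟨(1 - s₀) • vm + s₀ • vp, hvs0, tm, htmT, t', ht'T,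
        fun h => ht'ne h.symm, ?_, ?_, ?_⟩
      · rw [hGv, hGv, ht'eq]
      · intro t ht
        rw [hGv]
        simp only [hG_def]
        exact add_nonneg (mul_nonneg (by linarith) (hθmpos t ht))
          (mul_nonneg hs₀0 (hθppos t ht))
      · intro t ht
        rw [hGv, hGv]
        exact hs₀min t ht
    · exfalso
      push_neg at htie
      have hstrict : ∀ t ∈ T, t ≠ tm → G tm s₀ < G t s₀ := fun t ht htne =>
        (hs₀min t ht).lt_of_ne (fun h => htie t ht htne h.symm)
      have hWopen : IsOpen (⋂ t ∈ (T \ {tm} : Set _), {s | G tm s < G t s}) :=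
        (hT.diff (t := {tm})).isOpen_biInter fun t _ => isOpen_lt (hGcont tm) (hGcont t)
      have hWmem : s₀ ∈ ⋂ t ∈ (T \ {tm} : Set _), {s | G tm s < G t s} := by
        simp only [Set.mem_iInter, Set.mem_diff, Set.mem_singleton_iff]
        rintro t ⟨ht, htne⟩
        exact hstrict t ht htne
      obtain ⟨ε, hε, hball⟩ := Metric.isOpen_iff.mp hWopen s₀ hWmem
      obtain ⟨m, hm_pos, hm1, hm2⟩ :
          ∃ m : ℝ, 0 < m ∧ m ≤ ε/2 ∧ m ≤ (1 - s₀)/2 :=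
        ⟨min (ε/2) ((1 - s₀)/2), lt_min (by linarith) (by linarith),
          min_le_left _ _, min_le_right _ _⟩
      have hmemB : s₀ + m ∈ B := by
        rw [hBmem]
        refine ⟨⟨by linarith, by linarith⟩, fun t ht => ?_⟩
        by_cases htm : t = tm
        · rw [htm]
        · have hball' : s₀ + m ∈ Metric.ball s₀ ε := by
            rw [Metric.mem_ball, Real.dist_eq, abs_of_pos (by linarith : (0:ℝ) < s₀ + m - s₀)]
            linarith
          have := hball hball'
          simp only [Set.mem_iInter, Set.mem_diff, Set.mem_singleton_iff] at this
          exact (this t ⟨ht, htm⟩).le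
      have := le_csSup hBbdd hmemB
      linarith



/-- **Separating Axis Theorem (Theorem 3.2).** If the convex hulls of two nonempty finite
sets `S₁`, `S₂` in the Euclidean plane are disjoint, and one of the sets contains two
distinct points, then the two convex hulls can be (weakly) separated by a line through two
distinct points of one of the sets, with separating direction `v` an outer normal to the
polygon spanned by that set. -/
theorem separating_axis_theorem
    (S₁ S₂ : Set (EuclideanSpace ℝ (Fin 2)))
    (h₁ : S₁.Finite) (h₂ : S₂.Finite)
    (hne₁ : S₁.Nonempty) (hne₂ : S₂.Nonempty)
    (hdisj : Disjoint (convexHull ℝ S₁) (convexHull ℝ S₂))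
    (htwo : (∃ x ∈ S₁, ∃ y ∈ S₁, x ≠ y) ∨ (∃ x ∈ S₂, ∃ y ∈ S₂, x ≠ y)) :
    ∃ (v X Y : EuclideanSpace ℝ (Fin 2)), v ≠ 0 ∧ X ≠ Y ∧ ⟪v, X⟫ = ⟪v, Y⟫ ∧
      ((X ∈ S₁ ∧ Y ∈ S₁ ∧
          (∀ z ∈ convexHull ℝ S₁, ⟪v, z⟫ ≤ ⟪v, X⟫) ∧
          (∀ z ∈ convexHull ℝ S₂, ⟪v, X⟫ ≤ ⟪v, z⟫)) ∨
        (X ∈ S₂ ∧ Y ∈ S₂ ∧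
          (∀ z ∈ convexHull ℝ S₂, ⟪v, z⟫ ≤ ⟪v, X⟫) ∧
          (∀ z ∈ convexHull ℝ S₁, ⟪v, X⟫ ≤ ⟪v, z⟫))) := by
  classical
  set T : Set (EuclideanSpace ℝ (Fin 2)) := S₂ - S₁ with hT_def
  have hTfin : T.Finite := h₂.sub h₁
  obtain ⟨t0, ht0, t0', ht0', hne⟩ :
      ∃ t0 ∈ T, ∃ t0' ∈ T, t0 ≠ t0' := by
    rcases htwo with ⟨x, hx, y, hy, hxy⟩ | ⟨x, hx, y, hy, hxy⟩
    · obtain ⟨b, hb⟩ := hne₂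
      exact ⟨b - x, Set.sub_mem_sub hb hx, b - y, Set.sub_mem_sub hb hy,
        fun h => hxy (sub_right_inj.mp h)⟩
    · obtain ⟨a, ha⟩ := hne₁
      exact ⟨x - a, Set.sub_mem_sub hx ha, y - a, Set.sub_mem_sub hy ha,
        fun h => hxy (sub_left_inj.mp h)⟩
  have h0 : (0 : EuclideanSpace ℝ (Fin 2)) ∉ convexHull ℝ T := by
    intro h
    rw [hT_def, sub_eq_add_neg, convexHull_add, convexHull_neg] at h
    obtain ⟨p, hp, q, hq, hpq⟩ := Set.mem_add.mp h
    rw [Set.mem_neg] at hq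
    have hpq' : p = -q := eq_neg_of_add_eq_zero_left hpq
    exact Set.disjoint_left.mp hdisj (hpq' ▸ hq) hp
  obtain ⟨v, hv0, t1, ht1, t2, ht2, ht12, hvt12, hpos, hmin⟩ :=
    sat_key T hTfin t0 t0' ht0 ht0' hne h0
  obtain ⟨b1, hb1, a1, ha1, ht1eq⟩ := Set.mem_sub.mp ht1
  obtain ⟨b2, hb2, a2, ha2, ht2eq⟩ := Set.mem_sub.mp ht2
  obtain ⟨astar, hastar, hamax⟩ := Set.exists_max_image S₁ (fun a => ⟪v, a⟫) h₁ hne₁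
  obtain ⟨bstar, hbstar, hbmin⟩ := Set.exists_min_image S₂ (fun b => ⟪v, b⟫) h₂ hne₂
  have hlin : IsLinearMap ℝ (fun z : EuclideanSpace ℝ (Fin 2) => ⟪v, z⟫) :=
    ⟨fun x y => inner_add_right v x y, fun c x => real_inner_smul_right v x c⟩
  have hlin' : IsLinearMap ℝ (fun z : EuclideanSpace ℝ (Fin 2) => ⟪-v, z⟫) :=
    ⟨fun x y => inner_add_right (-v) x y, fun c x => real_inner_smul_right (-v) x c⟩
  have hmin2 : ∀ t ∈ T, ⟪v, t2⟫ ≤ ⟪v, t⟫ := fun t ht => hvt12 ▸ hmin t ht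
  have hkey : ∀ (b a t : EuclideanSpace ℝ (Fin 2)), b ∈ S₂ → a ∈ S₁ → b - a = t →
      (∀ t' ∈ T, ⟪v, t⟫ ≤ ⟪v, t'⟫) →
      ⟪v, b⟫ = ⟪v, bstar⟫ ∧ ⟪v, a⟫ = ⟪v, astar⟫ := by
    intro b a t hb ha hba hmint
    have h1 : ⟪v, t⟫ ≤ ⟪v, bstar - astar⟫ := hmint _ (Set.sub_mem_sub hbstar hastar)
    have h2 : ⟪v, b - a⟫ = ⟪v, t⟫ := by rw [hba]
    rw [inner_sub_right] at h1 h2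
    have hA : ⟪v, a⟫ ≤ ⟪v, astar⟫ := hamax a ha
    have hB : ⟪v, bstar⟫ ≤ ⟪v, b⟫ := hbmin b hb
    constructor <;> linarith
  obtain ⟨hq1b, hq1a⟩ := hkey b1 a1 t1 hb1 ha1 ht1eq hmin
  obtain ⟨hq2b, hq2a⟩ := hkey b2 a2 t2 hb2 ha2 ht2eq hmin2
  by_cases hbb : b1 = b2
  · have haa : a1 ≠ a2 := by
      intro h
      exact ht12 (by rw [← ht1eq, ← ht2eq, hbb, h])
    refine ⟨v, a1, a2, hv0, haa, by rw [hq1a, hq2a], Or.inl ⟨ha1, ha2, ?_, ?_⟩⟩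
    · intro z hz
      have hsub : convexHull ℝ S₁ ⊆ {z | ⟪v, z⟫ ≤ ⟪v, a1⟫} :=
        convexHull_min (fun a ha => by
          have := hamax a ha
          simp only [Set.mem_setOf_eq]
          rw [hq1a]
          exact this) (convex_halfSpace_le hlin _)
      exact hsub hz
    · intro z hz
      have hsub : convexHull ℝ S₂ ⊆ {z | ⟪v, a1⟫ ≤ ⟪v, z⟫} :=
        convexHull_min (fun b hb => by
          have := hpos (b - a1) (Set.sub_mem_sub hb ha1)
          rw [inner_sub_right] at this
          simp only [Set.mem_setOf_eq]
          linarith) (convex_halfSpace_ge hlin _)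
      exact hsub hz
  · refine ⟨-v, b1, b2, neg_ne_zero.mpr hv0, hbb, ?_, Or.inr ⟨hb1, hb2, ?_, ?_⟩⟩
    · rw [inner_neg_left, inner_neg_left, hq1b, hq2b]
    · intro z hz
      have hsub : convexHull ℝ S₂ ⊆ {z | ⟪-v, z⟫ ≤ ⟪-v, b1⟫} :=
        convexHull_min (fun b hb => by
          have := hbmin b hb
          simp only [Set.mem_setOf_eq, inner_neg_left]
          rw [hq1b]
          linarith) (convex_halfSpace_le hlin' _)
      exact hsub hz
    · intro z hz
      have hsub : convexHull ℝ S₁ ⊆ {z | ⟪-v, b1⟫ ≤ ⟪-v, z⟫} :=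
        convexHull_min (fun a ha => by
          have := hpos (b1 - a) (Set.sub_mem_sub hb1 ha)
          rw [inner_sub_right] at this
          simp only [Set.mem_setOf_eq, inner_neg_left]
          linarith) (convex_halfSpace_ge hlin' _)
      exact hsub hz
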